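/- The single-level merge operator S : (half-strip images of width 2^(m-1))² → (half-strip images of width 2^m), defined by S[f₀,f₁](h,2t) = f₀(h,t) + f₁(h+t,t) and S[f₀,f₁](h,2t+1) = f₀(h,t) + f₁(h+t+1,t), is injective on pairs of images whose support is bounded below in the first coordinate. -/

import Mathlib

/-- An image on the half-strip: support bounded below in the first coordinate. -/
def BddBelowSupp {k : ℕ} (f : ℤ × Fin k → ℝ) : Prop :=
  ∃ b : ℤ, ∀ i ≤ b, ∀ j, f (i, j) = 0

/-- Halving of a slope index: local slope of the sub-section. -/
def halfIdx {m : ℕ} (s : Fin (2 ^ (m + 1))) : Fin (2 ^ m) :=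
  ⟨s.val / 2, by have h1 := s.isLt; have h2 : 2 ^ (m + 1) = 2 ^ m * 2 := pow_succ 2 m; omega⟩

/-- Doubling of a slope index (even slope). -/
def dbl0 {m : ℕ} (s : Fin (2 ^ m)) : Fin (2 ^ (m + 1)) :=
  ⟨2 * s.val, by have h1 := s.isLt; have h2 : 2 ^ (m + 1) = 2 ^ m * 2 := pow_succ 2 m; omega⟩

/-- Doubling of a slope index, plus one (odd slope). -/
def dbl1 {m : ℕ} (s : Fin (2 ^ m)) : Fin (2 ^ (m + 1)) :=
  ⟨2 * s.val + 1, by have h1 := s.isLt; have h2 : 2 ^ (m + 1) = 2 ^ m * 2 := pow_succ 2 m; omega⟩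

/-- The single-level ADRT merge operator `S`:
`S[f₀,f₁](h,2t) = f₀(h,t) + f₁(h+t,t)` and `S[f₀,f₁](h,2t+1) = f₀(h,t) + f₁(h+t+1,t)`. -/
def Smerge (m : ℕ) (f₀ f₁ : ℤ × Fin (2 ^ m) → ℝ) : ℤ × Fin (2 ^ (m + 1)) → ℝ :=
  fun p =>
    f₀ (p.1, halfIdx p.2) +
      f₁ (p.1 + ((halfIdx p.2).val : ℤ) + ((p.2.val % 2 : ℕ) : ℤ), halfIdx p.2)

/-- The merge operator `S` is injective on pairs of half-strip images. -/
theorem Smerge_injective (m : ℕ) (f₀ f₁ g₀ g₁ : ℤ × Fin (2 ^ m) → ℝ)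
    (hf₀ : BddBelowSupp f₀) (hf₁ : BddBelowSupp f₁)
    (hg₀ : BddBelowSupp g₀) (hg₁ : BddBelowSupp g₁)
    (heq : Smerge m f₀ f₁ = Smerge m g₀ g₁) :
    f₀ = g₀ ∧ f₁ = g₁ := by
  obtain ⟨b₁, hb₁⟩ := hf₁
  obtain ⟨b₂, hb₂⟩ := hg₁
  set b := min b₁ b₂ with hb
  have hE : ∀ (h : ℤ) (t : Fin (2 ^ m)),
      f₀ (h, t) + f₁ (h + t.val, t) = g₀ (h, t) + g₁ (h + t.val, t) := by
    intro h t
    have := congrFun heq (h, dbl0 t)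
    simp only [Smerge, halfIdx, dbl0] at this
    simpa [Nat.mul_div_cancel_left, Nat.mul_mod_right, Fin.eta] using this
  have hO : ∀ (h : ℤ) (t : Fin (2 ^ m)),
      f₀ (h, t) + f₁ (h + t.val + 1, t) = g₀ (h, t) + g₁ (h + t.val + 1, t) := by
    intro h t
    have := congrFun heq (h, dbl1 t)
    simp only [Smerge, halfIdx, dbl1] at this
    have hdiv : (2 * t.val + 1) / 2 = t.val := by omega
    have hmod : (2 * t.val + 1) % 2 = 1 := by omega
    simp only [hdiv, hmod] at this
    simpa [Fin.eta] using this
  -- difference of f₁ and g₁ is constant along first coordinate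
  have hstep : ∀ (i : ℤ) (t : Fin (2 ^ m)),
      f₁ (i + 1, t) - g₁ (i + 1, t) = f₁ (i, t) - g₁ (i, t) := by
    intro i t
    have hE' := hE (i - t.val) t
    have hO' := hO (i - t.val) t
    have e1 : i - (t.val : ℤ) + t.val = i := by ring
    have e2 : i - (t.val : ℤ) + t.val + 1 = i + 1 := by ring
    rw [e1] at hE'
    rw [e2] at hO'
    linarith
  have h1 : f₁ = g₁ := by
    funext p
    obtain ⟨i, t⟩ := p
    have hzero : ∀ i ≤ b, f₁ (i, t) - g₁ (i, t) = 0 := by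
      intro i hi
      rw [hb₁ i (le_trans hi (min_le_left _ _)) t,
        hb₂ i (le_trans hi (min_le_right _ _)) t]
      ring
    have mono : ∀ j : ℤ, b ≤ j → f₁ (j, t) - g₁ (j, t) = 0 := by
      intro j hj
      exact Int.le_induction (motive := fun j _ => f₁ (j, t) - g₁ (j, t) = 0)
        (hzero b le_rfl) (fun n _ ih => by simpa [hstep n t] using ih) j hj
    have key : ∀ i : ℤ, f₁ (i, t) - g₁ (i, t) = 0 := by
      intro i
      rcases le_or_gt i b with hle | hlt
      · exact hzero i hle
      · exact mono i hlt.le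
    have := key i
    linarith
  have h0 : f₀ = g₀ := by
    funext p
    obtain ⟨i, t⟩ := p
    have := hE i t
    rw [h1] at this
    linarith
  exact ⟨h0, h1⟩
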